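/- Let q be an odd square prime power and n = (√q+1)/2. The Fermat curve U^n + V^n + W^n = 0 over F_q is the image of the Hermitian curve u^{√q+1} + v^{√q+1} + w^{√q+1} = 0 under the morphism (u,v,w) ↦ (u^2, v^2, w^2); in particular every F_q-rational point of the Fermat curve having all coordinates that are squares times a point of the Hermitian curve arises this way, and the Fermat curve of degree n is maximal over F_q. -/

import Mathlib

open Finset Polynomial

private lemma aux_card_pow_eq_one (F : Type*) [Field F] [Fintype F] [DecidableEq F] {d : ℕ}
    (hd0 : 0 < d) (hd : d ∣ Fintype.card F - 1) :
    (Finset.univ.filter fun x : F => x ^ d = 1).card = d := by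
  obtain ⟨g, hg⟩ := IsCyclic.exists_generator (α := Fˣ)
  have hog : orderOf g = Fintype.card F - 1 := by
    rw [orderOf_eq_card_of_forall_mem_zpowers hg, Nat.card_eq_fintype_card, Fintype.card_units]
  have hcpos : 0 < Fintype.card F - 1 := by
    have := Fintype.one_lt_card (α := F); omega
  set m := (Fintype.card F - 1) / d with hm
  have hmd : m * d = Fintype.card F - 1 := Nat.div_mul_cancel hd
  have hm0 : 0 < m := by
    rcases Nat.eq_zero_or_pos m with h | h
    · rw [h, zero_mul] at hmd; omega
    · exact h
  have hζ : orderOf (g ^ m) = d := by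
    rw [orderOf_pow, hog]
    have : Nat.gcd (Fintype.card F - 1) m = m := Nat.gcd_eq_right ⟨d, by omega⟩
    rw [this, ← hmd, Nat.mul_div_cancel_left _ hm0]
  have hpr : IsPrimitiveRoot (((g ^ m : Fˣ) : F)) d := by
    rw [IsPrimitiveRoot.coe_units_iff]
    exact hζ ▸ IsPrimitiveRoot.orderOf _
  have heq : (Finset.univ.filter fun x : F => x ^ d = 1) = Polynomial.nthRootsFinset d (1 : F) := by
    ext x; simp [Polynomial.mem_nthRootsFinset hd0]
  rw [heq, hpr.card_nthRootsFinset]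

private lemma aux_fiber (F : Type*) [Field F] [Fintype F] [DecidableEq F] {n : ℕ} (hn : 0 < n)
    (A y : F) (hy : y ^ n = A) (hA : A ≠ 0) :
    (Finset.univ.filter fun x : F => x ^ n = A).card
      = (Finset.univ.filter fun x : F => x ^ n = 1).card := by
  have hy0 : y ≠ 0 := by rintro rfl; rw [zero_pow hn.ne'] at hy; exact hA hy.symm
  apply Finset.card_nbij' (i := fun x => x * y⁻¹) (j := fun u => u * y)
  · intro x hx
    simp only [mem_coe, mem_filter, mem_univ, true_and] at hx ⊢
    rw [mul_pow, hx, inv_pow, ← hy, mul_inv_cancel₀ (pow_ne_zero _ hy0)]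
  · intro u hu
    simp only [mem_coe, mem_filter, mem_univ, true_and] at hu ⊢
    rw [mul_pow, hu, one_mul, hy]
  · intro x _; field_simp
  · intro u _; field_simp

private lemma aux_surj (F : Type*) [Field F] [Fintype F] {n e : ℕ} (he : 0 < e)
    (hfact : Fintype.card F - 1 = n * e) (A : F) (hA0 : A ≠ 0) (hA : A ^ e = 1) :
    ∃ y : F, y ^ n = A := by
  classical
  obtain ⟨g, hg⟩ := IsCyclic.exists_generator (α := Fˣ)
  have hog : orderOf g = Fintype.card F - 1 := by
    rw [orderOf_eq_card_of_forall_mem_zpowers hg, Nat.card_eq_fintype_card, Fintype.card_units]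
  set a : Fˣ := Units.mk0 A hA0 with ha
  obtain ⟨i, hi⟩ : a ∈ Submonoid.powers g := mem_powers_iff_mem_zpowers.2 (hg a)
  simp only at hi
  have hae : a ^ e = 1 := by
    ext; push_cast; simpa [ha] using hA
  have hdvd : orderOf g ∣ i * e := by
    apply orderOf_dvd_of_pow_eq_one
    rw [pow_mul, hi]; exact hae
  rw [hog, hfact] at hdvd
  have hni : n ∣ i := by
    rcases hdvd with ⟨c, hc⟩
    have h2 : e * i = e * (n * c) := by ring_nf; ring_nf at hc; linarith
    exact ⟨c, Nat.eq_of_mul_eq_mul_left he h2⟩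
  obtain ⟨j, rfl⟩ := hni
  refine ⟨((g ^ j : Fˣ) : F), ?_⟩
  rw [← Units.val_pow_eq_pow_val, ← pow_mul, mul_comm j n, hi]
  simp [ha]

private lemma aux_delta (F : Type*) [Field F] [Fintype F] {c : ℕ} (hc : 0 < c)
    (h : Fintype.card F - 1 = 2 * c) (hne : (-1 : F) ≠ 1) :
    ∃ δ : F, δ ^ c = -1 := by
  classical
  obtain ⟨g, hg⟩ := IsCyclic.exists_generator (α := Fˣ)
  have hog : orderOf g = Fintype.card F - 1 := by
    rw [orderOf_eq_card_of_forall_mem_zpowers hg, Nat.card_eq_fintype_card, Fintype.card_units]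
  set x : F := ((g : Fˣ) : F) ^ c with hx
  have hx2 : x ^ 2 = 1 := by
    rw [hx, ← pow_mul, mul_comm c 2, ← h, ← hog]
    have : (g : F) ^ orderOf g = ((g ^ orderOf g : Fˣ) : F) := by push_cast; ring
    rw [this, pow_orderOf_eq_one, Units.val_one]
  have hsq : (x - 1) * (x + 1) = 0 := by linear_combination hx2
  rcases mul_eq_zero.mp hsq with hcase | hcase
  · exfalso
    have hx1 : x = 1 := by linear_combination hcase
    have hgc : (g : Fˣ) ^ c = 1 := by
      ext; push_cast; rw [← hx, hx1]
    have := orderOf_dvd_of_pow_eq_one hgc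
    rw [hog, h] at this
    have := Nat.le_of_dvd hc this
    omega
  · exact ⟨((g : Fˣ) : F), by rw [← hx]; linear_combination hcase⟩

private lemma aux_ind3 {α : Type*} (T : Finset α) (P Q R : α → Prop)
    [DecidablePred P] [DecidablePred Q] [DecidablePred R] :
    (∑ t ∈ T, (if P t then 1 else 0) * (if Q t then 1 else 0) * (if R t then 1 else 0))
      = (T.filter fun t => P t ∧ Q t ∧ R t).card := by
  rw [Finset.card_filter]
  refine Finset.sum_congr rfl fun t _ => ?_
  by_cases hP : P t <;> by_cases hQ : Q t <;> by_cases hR : R t <;> simp [hP, hQ, hR]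

/-- the Fermat curve of degree n = (√q+1)/2 is the image of the
Hermitian curve under squaring of coordinates, and it is F_q-maximal: its
number of projective rational points equals q + 1 + 2gs with
g = (n-1)(n-2)/2 (counted via nonzero affine representatives). -/
theorem stmt8 (F : Type*) [Field F] [Fintype F]
    (p k : ℕ) (hp : p.Prime) (hpodd : Odd p)
    (s : ℕ) (hs : s = p ^ k) (q : ℕ) (hq : q = s ^ 2)
    (hcard : Fintype.card F = q)
    (n : ℕ) (hn : 2 * n = s + 1) :
    (∀ u v w : F, u ^ (s + 1) + v ^ (s + 1) + w ^ (s + 1) = 0 →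
      (u ^ 2) ^ n + (v ^ 2) ^ n + (w ^ 2) ^ n = 0) ∧
    Nat.card {x : F × F × F //
        x ≠ 0 ∧ x.1 ^ n + x.2.1 ^ n + x.2.2 ^ n = 0} =
      (q - 1) * (q + 1 + 2 * ((n - 1) * (n - 2) / 2) * s) := by
  classical
  constructor
  · intro u v w h
    have e : ∀ x : F, (x ^ 2) ^ n = x ^ (s + 1) := fun x => by
      rw [← pow_mul, hn]
    rw [e, e, e]; exact h
  -- setup
  have hcard2 : 2 ≤ Fintype.card F := Fintype.one_lt_card
  have hs3 : 3 ≤ s := by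
    rcases Nat.eq_zero_or_pos k with rfl | hk
    · exfalso; rw [hs, pow_zero] at hq; omega
    · have h2 := hp.two_le
      have hne : p ≠ 2 := by
        intro h; rw [h] at hpodd; exact (Nat.not_odd_iff_even.mpr even_two) hpodd
      calc 3 ≤ p := by omega
      _ = p ^ 1 := (pow_one p).symm
      _ ≤ p ^ k := Nat.pow_le_pow_right (by omega) hk
      _ = s := hs.symm
  obtain ⟨m, hnm, hsm⟩ : ∃ m, n = m + 2 ∧ s = 2 * m + 3 := ⟨n - 2, by omega, by omega⟩
  have hn0 : 0 < n := by omega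
  have hqm : q = (m + 2) * (2 * (2 * m + 2)) + 1 := by rw [hq, hsm]; ring
  have hq1 : q - 1 = n * (2 * (s - 1)) := by
    have h1 : s - 1 = 2 * m + 2 := by omega
    have h2 : n * (2 * (s - 1)) = (m + 2) * (2 * (2 * m + 2)) := by rw [hnm, h1]
    omega
  have hcq : Fintype.card F - 1 = n * (2 * (s - 1)) := by rw [hcard]; exact hq1
  -- characteristic
  haveI hfp : Fact p.Prime := ⟨hp⟩
  haveI hcharp : CharP F p := by
    haveI : CharP F (ringChar F) := ringChar.charP F
    obtain ⟨n', hprime', hcard'⟩ := FiniteField.card F (ringChar F)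
    have hpp : p = ringChar F := by
      have hck : Fintype.card F = p ^ (k * 2) := by
        rw [hcard, hq, hs, ← pow_mul]
      have hd : ringChar F ∣ p ^ (k * 2) := by
        rw [← hck, hcard']; exact dvd_pow_self _ n'.pos.ne'
      exact ((Nat.prime_dvd_prime_iff_eq hprime' hp).mp (hprime'.dvd_of_dvd_pow hd)).symm
    rw [hpp]; infer_instance
  have hfrob : ∀ x y : F, (x + y) ^ s = x ^ s + y ^ s := fun x y => by
    rw [hs]; exact add_pow_char_pow x y p k
  have h2F : (2 : F) ≠ 0 := by
    intro h
    have hdvd := (CharP.cast_eq_zero_iff F p 2).mp (by exact_mod_cast h)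
    have := Nat.le_of_dvd (by norm_num) hdvd
    have h2 := hp.two_le
    have hne : p ≠ 2 := by
      intro h; rw [h] at hpodd; exact (Nat.not_odd_iff_even.mpr even_two) hpodd
    omega
  have hm1 : (-1 : F) ≠ 1 := by
    intro h; apply h2F; linear_combination -h
  have hsqrt : ∀ x : F, x ^ 2 = 1 → x = 1 ∨ x = -1 := by
    intro x hx
    have h1 : (x - 1) * (x + 1) = 0 := by linear_combination hx
    rcases mul_eq_zero.mp h1 with h | h
    · left; linear_combination h
    · right; linear_combination h
  have hsodd : Odd s := ⟨m + 1, by omega⟩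
  have hpow : ∀ x : F, x ^ s = x ^ (s - 1) * x := fun x => by
    rw [← pow_succ]; congr 1; omega
  -- the exponent for the subgroup of n-th powers
  set N2 := 2 * (s - 1) with hN2
  have hN2pos : 0 < N2 := by rw [hN2]; omega
  have h0N2 : (0 : F) ^ N2 ≠ 1 := by
    rw [zero_pow hN2pos.ne']; exact zero_ne_one
  have hNz : ∀ x : F, x ^ N2 = 1 → x ≠ 0 := fun x hx h0 => h0N2 (h0 ▸ hx)
  have hN2sq : ∀ x : F, x ^ N2 = (x ^ (s - 1)) ^ 2 := fun x => by
    rw [← pow_mul, hN2, mul_comm]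
  -- the counting function
  set r : F → ℕ := fun A => (univ.filter fun x : F => x ^ n = A).card with hrdef
  have hr0 : r 0 = 1 := by
    rw [hrdef]
    have : (univ.filter fun x : F => x ^ n = (0 : F)) = {0} := by
      ext x; simp [pow_eq_zero_iff hn0.ne']
    simp only at this ⊢
    rw [this, card_singleton]
  have hν : (univ.filter fun x : F => x ^ n = (1 : F)).card = n :=
    aux_card_pow_eq_one F hn0 ⟨N2, hcq⟩
  have hrH : ∀ A : F, A ≠ 0 → A ^ N2 = 1 → r A = n := by
    intro A hA0 hA
    obtain ⟨y, hy⟩ := aux_surj F hN2pos hcq A hA0 hA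
    rw [hrdef]; simp only
    rw [aux_fiber F hn0 A y hy hA0, hν]
  have hrZ : ∀ A : F, A ≠ 0 → A ^ N2 ≠ 1 → r A = 0 := by
    intro A hA0 hA
    rw [hrdef]; simp only
    rw [Finset.card_eq_zero, Finset.filter_eq_empty_iff]
    intro x _ hx
    apply hA
    have hx0 : x ≠ 0 := by rintro rfl; rw [zero_pow hn0.ne'] at hx; exact hA0 hx.symm
    rw [← hx, ← pow_mul, ← hcq, FiniteField.pow_card_sub_one_eq_one x hx0]
  -- indicator decomposition
  set E : F → ℕ := fun A => if A = 0 then 1 else 0 with hE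
  set G : F → ℕ := fun A => if A ^ N2 = 1 then 1 else 0 with hG
  have hrEG : ∀ A, r A = E A + n * G A := by
    intro A
    by_cases hA : A = 0
    · subst hA; rw [hr0, hE, hG]; simp [h0N2]
    · by_cases hH : A ^ N2 = 1
      · rw [hrH A hA hH, hE, hG]; simp [hA, hH]
      · rw [hrZ A hA hH, hE, hG]; simp [hA, hH]
  -- main sets
  set T := univ.filter (fun t : F × F × F => t.1 + t.2.1 + t.2.2 = 0) with hT
  set S := univ.filter (fun t : F × F × F => t.1 ^ n + t.2.1 ^ n + t.2.2 ^ n = 0) with hS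
  -- step 1: fibering over the power map
  have step1 : S.card = ∑ t ∈ T, r t.1 * r t.2.1 * r t.2.2 := by
    rw [Finset.card_eq_sum_card_fiberwise
      (f := fun t : F × F × F => (t.1 ^ n, t.2.1 ^ n, t.2.2 ^ n)) (t := T)
      (fun x hx => by
        simp only [hS, mem_coe, mem_filter, mem_univ, true_and] at hx
        simp only [hT, mem_coe, mem_filter, mem_univ, true_and]
        exact hx)]
    refine Finset.sum_congr rfl fun A hA => ?_
    have hA0 : A.1 + A.2.1 + A.2.2 = 0 := by
      simpa only [hT, mem_filter, mem_univ, true_and] using hA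
    have heq : S.filter (fun t => (t.1 ^ n, t.2.1 ^ n, t.2.2 ^ n) = A)
        = (univ.filter fun x : F => x ^ n = A.1) ×ˢ
          ((univ.filter fun y : F => y ^ n = A.2.1) ×ˢ
           (univ.filter fun z : F => z ^ n = A.2.2)) := by
      ext t
      simp only [hS, mem_filter, mem_univ, true_and, mem_product, Prod.ext_iff, filter_filter]
      constructor
      · rintro ⟨_, h1, h2, h3⟩; exact ⟨h1, h2, h3⟩
      · rintro ⟨h1, h2, h3⟩; exact ⟨by rw [h1, h2, h3]; exact hA0, h1, h2, h3⟩
    rw [heq, card_product, card_product, hrdef]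
    dsimp only
    rw [mul_assoc]
  -- step 2: expand the product of indicators
  have hprod : ∀ t : F × F × F, r t.1 * r t.2.1 * r t.2.2
      = (E t.1 * E t.2.1 * E t.2.2)
        + (n * (G t.1 * E t.2.1 * E t.2.2) + n * (E t.1 * G t.2.1 * E t.2.2)
            + n * (E t.1 * E t.2.1 * G t.2.2))
        + (n ^ 2 * (E t.1 * G t.2.1 * G t.2.2) + n ^ 2 * (G t.1 * E t.2.1 * G t.2.2)
            + n ^ 2 * (G t.1 * G t.2.1 * E t.2.2))
        + n ^ 3 * (G t.1 * G t.2.1 * G t.2.2) := by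
    intro t; rw [hrEG, hrEG, hrEG]; ring
  have step2 : S.card
      = (T.filter fun t => t.1 = 0 ∧ t.2.1 = 0 ∧ t.2.2 = 0).card
        + (n * (T.filter fun t => t.1 ^ N2 = 1 ∧ t.2.1 = 0 ∧ t.2.2 = 0).card
          + n * (T.filter fun t => t.1 = 0 ∧ t.2.1 ^ N2 = 1 ∧ t.2.2 = 0).card
          + n * (T.filter fun t => t.1 = 0 ∧ t.2.1 = 0 ∧ t.2.2 ^ N2 = 1).card)
        + (n ^ 2 * (T.filter fun t => t.1 = 0 ∧ t.2.1 ^ N2 = 1 ∧ t.2.2 ^ N2 = 1).card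
          + n ^ 2 * (T.filter fun t => t.1 ^ N2 = 1 ∧ t.2.1 = 0 ∧ t.2.2 ^ N2 = 1).card
          + n ^ 2 * (T.filter fun t => t.1 ^ N2 = 1 ∧ t.2.1 ^ N2 = 1 ∧ t.2.2 = 0).card)
        + n ^ 3 * (T.filter fun t => t.1 ^ N2 = 1 ∧ t.2.1 ^ N2 = 1 ∧ t.2.2 ^ N2 = 1).card := by
    rw [step1, Finset.sum_congr rfl (fun t _ => hprod t)]
    simp only [Finset.sum_add_distrib, ← Finset.mul_sum, hE, hG]
    rw [aux_ind3 T (fun t => t.1 = 0) (fun t => t.2.1 = 0) (fun t => t.2.2 = 0),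
        aux_ind3 T (fun t => t.1 ^ N2 = 1) (fun t => t.2.1 = 0) (fun t => t.2.2 = 0),
        aux_ind3 T (fun t => t.1 = 0) (fun t => t.2.1 ^ N2 = 1) (fun t => t.2.2 = 0),
        aux_ind3 T (fun t => t.1 = 0) (fun t => t.2.1 = 0) (fun t => t.2.2 ^ N2 = 1),
        aux_ind3 T (fun t => t.1 = 0) (fun t => t.2.1 ^ N2 = 1) (fun t => t.2.2 ^ N2 = 1),
        aux_ind3 T (fun t => t.1 ^ N2 = 1) (fun t => t.2.1 = 0) (fun t => t.2.2 ^ N2 = 1),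
        aux_ind3 T (fun t => t.1 ^ N2 = 1) (fun t => t.2.1 ^ N2 = 1) (fun t => t.2.2 = 0),
        aux_ind3 T (fun t => t.1 ^ N2 = 1) (fun t => t.2.1 ^ N2 = 1) (fun t => t.2.2 ^ N2 = 1)]
  -- count of solutions of x^N2 = 1
  have hHcard : (univ.filter fun x : F => x ^ N2 = 1).card = N2 :=
    aux_card_pow_eq_one F hN2pos ⟨n, by rw [hcq]; ring⟩
  have hNeven : Even N2 := ⟨s - 1, by rw [hN2]; ring⟩
  have hs1even : Even (s - 1) := ⟨m + 1, by omega⟩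
  -- the eight counts
  have c1 : (T.filter fun t : F × F × F => t.1 = 0 ∧ t.2.1 = 0 ∧ t.2.2 = 0).card = 1 := by
    have heq : (T.filter fun t : F × F × F => t.1 = 0 ∧ t.2.1 = 0 ∧ t.2.2 = 0)
        = {((0 : F), (0 : F), (0 : F))} := by
      ext t
      simp only [hT, filter_filter, mem_filter, mem_univ, true_and, mem_singleton,
        Prod.ext_iff]
      constructor
      · rintro ⟨_, h1, h2, h3⟩; exact ⟨h1, h2, h3⟩
      · rintro ⟨h1, h2, h3⟩
        exact ⟨by rw [h1, h2, h3]; ring, h1, h2, h3⟩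
    rw [heq, card_singleton]
  have c2a : (T.filter fun t : F × F × F => t.1 ^ N2 = 1 ∧ t.2.1 = 0 ∧ t.2.2 = 0).card = 0 := by
    rw [Finset.card_eq_zero, Finset.filter_eq_empty_iff]
    intro t ht
    rintro ⟨h1, h2, h3⟩
    have hsum : t.1 + t.2.1 + t.2.2 = 0 := by
      simpa only [hT, mem_filter, mem_univ, true_and] using ht
    exact hNz _ h1 (by linear_combination hsum - h2 - h3)
  have c2b : (T.filter fun t : F × F × F => t.1 = 0 ∧ t.2.1 ^ N2 = 1 ∧ t.2.2 = 0).card = 0 := by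
    rw [Finset.card_eq_zero, Finset.filter_eq_empty_iff]
    intro t ht
    rintro ⟨h1, h2, h3⟩
    have hsum : t.1 + t.2.1 + t.2.2 = 0 := by
      simpa only [hT, mem_filter, mem_univ, true_and] using ht
    exact hNz _ h2 (by linear_combination hsum - h1 - h3)
  have c2c : (T.filter fun t : F × F × F => t.1 = 0 ∧ t.2.1 = 0 ∧ t.2.2 ^ N2 = 1).card = 0 := by
    rw [Finset.card_eq_zero, Finset.filter_eq_empty_iff]
    intro t ht
    rintro ⟨h1, h2, h3⟩
    have hsum : t.1 + t.2.1 + t.2.2 = 0 := by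
      simpa only [hT, mem_filter, mem_univ, true_and] using ht
    exact hNz _ h3 (by linear_combination hsum - h1 - h2)
  have c3a : (T.filter fun t : F × F × F =>
      t.1 = 0 ∧ t.2.1 ^ N2 = 1 ∧ t.2.2 ^ N2 = 1).card = N2 := by
    have hb : (T.filter fun t : F × F × F =>
        t.1 = 0 ∧ t.2.1 ^ N2 = 1 ∧ t.2.2 ^ N2 = 1).card
        = (univ.filter fun x : F => x ^ N2 = 1).card := by
      apply card_nbij' (i := fun t : F × F × F => t.2.1) (j := fun b : F => (0, b, -b))
      · intro t ht
        simp only [hT, filter_filter, mem_coe, mem_filter, mem_univ, true_and] at ht ⊢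
        exact ht.2.2.1
      · intro b hb
        have hb' : b ^ N2 = 1 := by simpa using hb
        refine mem_filter.mpr ⟨mem_filter.mpr ⟨mem_univ _, ?_⟩, ?_, ?_, ?_⟩
        · show (0 : F) + b + -b = 0; ring
        · rfl
        · exact hb'
        · show (-b) ^ N2 = 1; rw [hNeven.neg_pow]; exact hb'
      · intro t ht
        simp only [hT, filter_filter, mem_coe, mem_filter, mem_univ, true_and] at ht
        obtain ⟨hsum, h1, _, _⟩ := ht
        simp only [Prod.ext_iff, eq_self_iff_true, true_and, and_true]
        exact ⟨h1.symm, by linear_combination - hsum + h1⟩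
      · intro b _; rfl
    rw [hb, hHcard]
  have c3b : (T.filter fun t : F × F × F =>
      t.1 ^ N2 = 1 ∧ t.2.1 = 0 ∧ t.2.2 ^ N2 = 1).card = N2 := by
    have hb : (T.filter fun t : F × F × F =>
        t.1 ^ N2 = 1 ∧ t.2.1 = 0 ∧ t.2.2 ^ N2 = 1).card
        = (univ.filter fun x : F => x ^ N2 = 1).card := by
      apply card_nbij' (i := fun t : F × F × F => t.1) (j := fun a : F => (a, 0, -a))
      · intro t ht
        simp only [hT, filter_filter, mem_coe, mem_filter, mem_univ, true_and] at ht ⊢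
        exact ht.2.1
      · intro a ha
        have ha' : a ^ N2 = 1 := by simpa using ha
        refine mem_filter.mpr ⟨mem_filter.mpr ⟨mem_univ _, ?_⟩, ?_, ?_, ?_⟩
        · show a + (0 : F) + -a = 0; ring
        · exact ha'
        · rfl
        · show (-a) ^ N2 = 1; rw [hNeven.neg_pow]; exact ha'
      · intro t ht
        simp only [hT, filter_filter, mem_coe, mem_filter, mem_univ, true_and] at ht
        obtain ⟨hsum, _, h2, _⟩ := ht
        simp only [Prod.ext_iff, eq_self_iff_true, true_and, and_true]
        exact ⟨h2.symm, by linear_combination - hsum + h2⟩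
      · intro a _; rfl
    rw [hb, hHcard]
  have c3c : (T.filter fun t : F × F × F =>
      t.1 ^ N2 = 1 ∧ t.2.1 ^ N2 = 1 ∧ t.2.2 = 0).card = N2 := by
    have hb : (T.filter fun t : F × F × F =>
        t.1 ^ N2 = 1 ∧ t.2.1 ^ N2 = 1 ∧ t.2.2 = 0).card
        = (univ.filter fun x : F => x ^ N2 = 1).card := by
      apply card_nbij' (i := fun t : F × F × F => t.1) (j := fun a : F => (a, -a, 0))
      · intro t ht
        simp only [hT, filter_filter, mem_coe, mem_filter, mem_univ, true_and] at ht ⊢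
        exact ht.2.1
      · intro a ha
        have ha' : a ^ N2 = 1 := by simpa using ha
        refine mem_filter.mpr ⟨mem_filter.mpr ⟨mem_univ _, ?_⟩, ?_, ?_, ?_⟩
        · show a + -a + (0 : F) = 0; ring
        · exact ha'
        · show (-a) ^ N2 = 1; rw [hNeven.neg_pow]; exact ha'
        · rfl
      · intro t ht
        simp only [hT, filter_filter, mem_coe, mem_filter, mem_univ, true_and] at ht
        obtain ⟨hsum, _, _, h3⟩ := ht
        simp only [Prod.ext_iff, eq_self_iff_true, true_and, and_true]
        exact ⟨by linear_combination - hsum + h3, h3.symm⟩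
      · intro a _; rfl
    rw [hb, hHcard]
  -- the sign lemma via Frobenius
  have hsign : ∀ a b c : F, a ^ N2 = 1 → b ^ N2 = 1 → c ^ N2 = 1 → a + b + c = 0 →
      b ^ (s - 1) = a ^ (s - 1) ∧ c ^ (s - 1) = a ^ (s - 1) := by
    intro a b c hga hgb hgc hsum
    have ha0 := hNz a hga; have hb0 := hNz b hgb; have hc0 := hNz c hgc
    have hfr : a ^ (s - 1) * a + b ^ (s - 1) * b + c ^ (s - 1) * c = 0 := by
      have h1 : (a + b + c) ^ s = 0 := by rw [hsum, zero_pow (by omega : s ≠ 0)]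
      rw [hfrob (a + b) c, hfrob a b, hpow a, hpow b, hpow c] at h1
      exact h1
    have hA2 : (a ^ (s - 1)) ^ 2 = 1 := by rw [← hN2sq]; exact hga
    have hB2 : (b ^ (s - 1)) ^ 2 = 1 := by rw [← hN2sq]; exact hgb
    have hC2 : (c ^ (s - 1)) ^ 2 = 1 := by rw [← hN2sq]; exact hgc
    rcases hsqrt _ hA2 with hA | hA <;> rcases hsqrt _ hB2 with hB | hB <;>
      rcases hsqrt _ hC2 with hC | hC
    · exact ⟨by rw [hB, hA], by rw [hC, hA]⟩
    · exfalso
      rw [hA, hB, hC] at hfr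
      exact hc0 ((mul_eq_zero.mp
        (show (2 : F) * c = 0 by linear_combination hsum - hfr)).resolve_left h2F)
    · exfalso
      rw [hA, hB, hC] at hfr
      exact hb0 ((mul_eq_zero.mp
        (show (2 : F) * b = 0 by linear_combination hsum - hfr)).resolve_left h2F)
    · exfalso
      rw [hA, hB, hC] at hfr
      exact ha0 ((mul_eq_zero.mp
        (show (2 : F) * a = 0 by linear_combination hsum + hfr)).resolve_left h2F)
    · exfalso
      rw [hA, hB, hC] at hfr
      exact ha0 ((mul_eq_zero.mp
        (show (2 : F) * a = 0 by linear_combination hsum - hfr)).resolve_left h2F)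
    · exfalso
      rw [hA, hB, hC] at hfr
      exact hb0 ((mul_eq_zero.mp
        (show (2 : F) * b = 0 by linear_combination hsum + hfr)).resolve_left h2F)
    · exfalso
      rw [hA, hB, hC] at hfr
      exact hc0 ((mul_eq_zero.mp
        (show (2 : F) * c = 0 by linear_combination hsum + hfr)).resolve_left h2F)
    · exact ⟨by rw [hB, hA], by rw [hC, hA]⟩
  -- characterizations of the subfield and its twisted coset
  have hK1 : ∀ x : F, (x ≠ 0 ∧ x ^ s = x) ↔ x ^ (s - 1) = 1 := by
    intro x
    constructor
    · rintro ⟨hx0, hxs⟩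
      have h1 : x ^ (s - 1) * x = 1 * x := by rw [← hpow, hxs, one_mul]
      exact mul_right_cancel₀ hx0 h1
    · intro h
      have hx0 : x ≠ 0 := by
        rintro rfl
        rw [zero_pow (by omega : s - 1 ≠ 0)] at h
        exact zero_ne_one h
      exact ⟨hx0, by rw [hpow, h, one_mul]⟩
  have hK2 : ∀ x : F, (x ≠ 0 ∧ x ^ s = -x) ↔ x ^ (s - 1) = -1 := by
    intro x
    constructor
    · rintro ⟨hx0, hxs⟩
      have h1 : x ^ (s - 1) * x = (-1) * x := by rw [← hpow, hxs]; ring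
      exact mul_right_cancel₀ hx0 h1
    · intro h
      have hx0 : x ≠ 0 := by
        rintro rfl
        rw [zero_pow (by omega : s - 1 ≠ 0)] at h
        exact (neg_ne_zero.mpr (one_ne_zero)) h.symm
      exact ⟨hx0, by rw [hpow, h]; ring⟩
  have hPow2 : ∀ x : F, x ^ (s - 1) = 1 → x ^ N2 = 1 := fun x h => by
    rw [hN2sq, h, one_pow]
  have hPow2' : ∀ x : F, x ^ (s - 1) = -1 → x ^ N2 = 1 := fun x h => by
    rw [hN2sq, h, neg_one_sq]
  -- the all-nonzero count
  set P3 := T.filter (fun t : F × F × F =>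
    t.1 ^ N2 = 1 ∧ t.2.1 ^ N2 = 1 ∧ t.2.2 ^ N2 = 1) with hP3
  set Pfin := univ.filter (fun t : F × F × F =>
    (t.1 ≠ 0 ∧ t.1 ^ s = t.1) ∧ (t.2.1 ≠ 0 ∧ t.2.1 ^ s = t.2.1) ∧
    (t.2.2 ≠ 0 ∧ t.2.2 ^ s = t.2.2) ∧ t.1 + t.2.1 + t.2.2 = 0) with hPfin
  set Mfin := univ.filter (fun t : F × F × F =>
    (t.1 ≠ 0 ∧ t.1 ^ s = -t.1) ∧ (t.2.1 ≠ 0 ∧ t.2.1 ^ s = -t.2.1) ∧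
    (t.2.2 ≠ 0 ∧ t.2.2 ^ s = -t.2.2) ∧ t.1 + t.2.1 + t.2.2 = 0) with hMfin
  have hsplit := Finset.card_filter_add_card_filter_not (s := P3)
    (p := fun t : F × F × F => t.1 ^ (s - 1) = 1)
  have hPeq : P3.filter (fun t : F × F × F => t.1 ^ (s - 1) = 1) = Pfin := by
    ext t
    simp only [hP3, hT, hPfin, filter_filter, mem_filter, mem_univ, true_and]
    constructor
    · rintro ⟨⟨hsum, hga, hgb, hgc⟩, hs1⟩
      obtain ⟨hb, hc⟩ := hsign t.1 t.2.1 t.2.2 hga hgb hgc hsum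
      exact ⟨(hK1 _).mpr hs1, (hK1 _).mpr (by rw [hb, hs1]),
        (hK1 _).mpr (by rw [hc, hs1]), hsum⟩
    · rintro ⟨h1, h2, h3, hsum⟩
      exact ⟨⟨hsum, hPow2 _ ((hK1 _).mp h1), hPow2 _ ((hK1 _).mp h2),
        hPow2 _ ((hK1 _).mp h3)⟩, (hK1 _).mp h1⟩
  have hMeq : P3.filter (fun t : F × F × F => ¬ t.1 ^ (s - 1) = 1) = Mfin := by
    ext t
    simp only [hP3, hT, hMfin, filter_filter, mem_filter, mem_univ, true_and]
    constructor
    · rintro ⟨⟨hsum, hga, hgb, hgc⟩, hs1⟩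
      have hA2 : (t.1 ^ (s - 1)) ^ 2 = 1 := by rw [← hN2sq]; exact hga
      rcases hsqrt _ hA2 with hA | hA
      · exact absurd hA hs1
      obtain ⟨hb, hc⟩ := hsign t.1 t.2.1 t.2.2 hga hgb hgc hsum
      exact ⟨(hK2 _).mpr hA, (hK2 _).mpr (by rw [hb, hA]),
        (hK2 _).mpr (by rw [hc, hA]), hsum⟩
    · rintro ⟨h1, h2, h3, hsum⟩
      refine ⟨⟨hsum, hPow2' _ ((hK2 _).mp h1), hPow2' _ ((hK2 _).mp h2),
        hPow2' _ ((hK2 _).mp h3)⟩, ?_⟩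
      rw [(hK2 _).mp h1]
      exact hm1
  -- counting Pfin
  set Kfin := univ.filter (fun x : F => x ^ (s - 1) = 1) with hKfin
  have hKcard : Kfin.card = s - 1 :=
    aux_card_pow_eq_one F (by omega) ⟨2 * n, by rw [hcq]; ring⟩
  have hKmem : ∀ x : F, x ∈ Kfin ↔ (x ≠ 0 ∧ x ^ s = x) := by
    intro x
    rw [hKfin, mem_filter]
    simp only [mem_univ, true_and]
    exact (hK1 x).symm
  set QF := (Kfin ×ˢ Kfin).filter (fun ab : F × F => ¬ (ab.1 + ab.2 = 0)) with hQF
  have hPQ : Pfin.card = QF.card := by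
    apply card_nbij' (i := fun t : F × F × F => (t.1, t.2.1))
      (j := fun ab : F × F => (ab.1, ab.2, -(ab.1 + ab.2)))
    · intro t ht
      simp only [hPfin, mem_coe, mem_filter, mem_univ, true_and] at ht
      obtain ⟨h1, h2, h3, hsum⟩ := ht
      simp only [hQF, mem_coe, mem_filter, mem_product]
      refine ⟨⟨(hKmem _).mpr h1, (hKmem _).mpr h2⟩, ?_⟩
      intro hz
      exact h3.1 (by linear_combination hsum - hz)
    · intro ab hab
      simp only [hQF, mem_coe, mem_filter, mem_product] at hab
      obtain ⟨⟨ha, hb⟩, hz⟩ := hab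
      obtain ⟨ha0, has⟩ := (hKmem _).mp ha
      obtain ⟨hb0, hbs⟩ := (hKmem _).mp hb
      simp only [hPfin, mem_coe, mem_filter, mem_univ, true_and]
      refine ⟨⟨ha0, has⟩, ⟨hb0, hbs⟩, ⟨neg_ne_zero.mpr hz, ?_⟩, by ring⟩
      rw [hsodd.neg_pow, hfrob, has, hbs]
    · intro t ht
      simp only [hPfin, mem_coe, mem_filter, mem_univ, true_and] at ht
      obtain ⟨_, _, _, hsum⟩ := ht
      simp only [Prod.ext_iff, eq_self_iff_true, true_and, and_true]
      linear_combination - hsum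
    · intro ab _; rfl
  have hZcard : ((Kfin ×ˢ Kfin).filter (fun ab : F × F => ab.1 + ab.2 = 0)).card = s - 1 := by
    rw [← hKcard]
    apply card_nbij' (i := fun ab : F × F => ab.1) (j := fun a : F => (a, -a))
    · intro ab hab
      simp only [mem_coe, mem_filter, mem_product] at hab
      exact hab.1.1
    · intro a ha
      simp only [mem_coe, mem_filter, mem_product]
      have := (hKmem _).mp ha
      refine ⟨⟨ha, (hKmem _).mpr ⟨neg_ne_zero.mpr this.1, ?_⟩⟩, by ring⟩
      rw [hsodd.neg_pow, this.2]
    · intro ab hab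
      simp only [mem_coe, mem_filter, mem_product] at hab
      simp only [Prod.ext_iff, eq_self_iff_true, true_and, and_true]
      linear_combination - hab.2
    · intro a _; rfl
  have hKK := Finset.card_filter_add_card_filter_not (s := Kfin ×ˢ Kfin)
    (p := fun ab : F × F => ab.1 + ab.2 = 0)
  rw [card_product, hKcard, hZcard, ← hQF] at hKK
  have es1 : s - 1 = 2 * m + 2 := by omega
  have es2 : s - 2 = 2 * m + 1 := by omega
  have hQcard : QF.card = (s - 1) * (s - 2) := by
    have hkey : (2 * m + 2) * (2 * m + 2) = (2 * m + 2) + (2 * m + 2) * (2 * m + 1) := by ring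
    rw [es1, es2]
    rw [es1] at hKK
    omega
  -- counting Mfin via the twisting element δ
  have hhalf : Fintype.card F - 1 = 2 * (n * (s - 1)) := by rw [hcq]; ring
  obtain ⟨δ0, hδ0⟩ := aux_delta F (Nat.mul_pos hn0 (by omega)) hhalf hm1
  set δ : F := δ0 ^ n with hδdef
  have hδ : δ ^ (s - 1) = -1 := by rw [hδdef, ← pow_mul]; exact hδ0
  have hδne : δ ≠ 0 := by
    intro h
    rw [h, zero_pow (by omega : s - 1 ≠ 0)] at hδ
    exact (neg_ne_zero.mpr (one_ne_zero)) hδ.symm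
  have hδs : δ ^ s = -δ := by rw [hpow, hδ]; ring
  have hMP : Mfin.card = Pfin.card := by
    apply card_nbij'
      (i := fun t : F × F × F => (δ⁻¹ * t.1, δ⁻¹ * t.2.1, δ⁻¹ * t.2.2))
      (j := fun t : F × F × F => (δ * t.1, δ * t.2.1, δ * t.2.2))
    · intro t ht
      simp only [hMfin, hPfin, mem_coe, mem_filter, mem_univ, true_and] at ht ⊢
      obtain ⟨h1, h2, h3, hsum⟩ := ht
      have hcomp : ∀ x : F, x ≠ 0 → x ^ s = -x → (δ⁻¹ * x ≠ 0 ∧ (δ⁻¹ * x) ^ s = δ⁻¹ * x) := by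
        intro x hx0 hxs
        refine ⟨mul_ne_zero (inv_ne_zero hδne) hx0, ?_⟩
        rw [mul_pow, inv_pow, hδs, hxs, inv_neg, neg_mul_neg]
      exact ⟨hcomp _ h1.1 h1.2, hcomp _ h2.1 h2.2, hcomp _ h3.1 h3.2,
        by rw [← mul_add, ← mul_add, hsum, mul_zero]⟩
    · intro t ht
      simp only [hMfin, hPfin, mem_coe, mem_filter, mem_univ, true_and] at ht ⊢
      obtain ⟨h1, h2, h3, hsum⟩ := ht
      have hcomp : ∀ x : F, x ≠ 0 → x ^ s = x → (δ * x ≠ 0 ∧ (δ * x) ^ s = -(δ * x)) := by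
        intro x hx0 hxs
        refine ⟨mul_ne_zero hδne hx0, ?_⟩
        rw [mul_pow, hδs, hxs, neg_mul]
      exact ⟨hcomp _ h1.1 h1.2, hcomp _ h2.1 h2.2, hcomp _ h3.1 h3.2,
        by rw [← mul_add, ← mul_add, hsum, mul_zero]⟩
    · intro t _
      simp only [Prod.ext_iff]
      exact ⟨mul_inv_cancel_left₀ hδne _, mul_inv_cancel_left₀ hδne _,
        mul_inv_cancel_left₀ hδne _⟩
    · intro t _
      simp only [Prod.ext_iff]
      exact ⟨inv_mul_cancel_left₀ hδne _, inv_mul_cancel_left₀ hδne _,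
        inv_mul_cancel_left₀ hδne _⟩
  have c4 : P3.card = (s - 1) * (s - 2) + (s - 1) * (s - 2) := by
    rw [← hsplit, hPeq, hMeq, hMP, hPQ, hQcard]
  -- assemble
  have hScard : S.card = 1 + (n * 0 + n * 0 + n * 0) + (n ^ 2 * N2 + n ^ 2 * N2 + n ^ 2 * N2)
      + n ^ 3 * ((s - 1) * (s - 2) + (s - 1) * (s - 2)) := by
    rw [step2, c1, c2a, c2b, c2c, c3a, c3b, c3c, c4]
  -- from the affine count to the required statement
  have hfe : (univ.filter fun t : F × F × F =>
      t ≠ 0 ∧ t.1 ^ n + t.2.1 ^ n + t.2.2 ^ n = 0) = S.erase 0 := by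
    ext t
    simp only [hS, mem_erase, mem_filter, mem_univ, true_and]
  have h0S : (0 : F × F × F) ∈ S := by
    simp only [hS, mem_filter, mem_univ, true_and, Prod.fst_zero, Prod.snd_zero,
      zero_pow hn0.ne', add_zero]
  have hcards : Nat.card {x : F × F × F //
      x ≠ 0 ∧ x.1 ^ n + x.2.1 ^ n + x.2.2 ^ n = 0} = S.card - 1 := by
    rw [Nat.card_eq_fintype_card, Fintype.card_subtype, hfe, card_erase_of_mem h0S]
  rw [hcards]
  have hgg : 2 * ((n - 1) * (n - 2) / 2) = (m + 1) * m := by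
    have e1 : n - 1 = m + 1 := by omega
    have e2 : n - 2 = m := by omega
    rw [e1, e2]
    obtain ⟨c, hc⟩ := Nat.even_mul_succ_self m
    have hcomm : (m + 1) * m = m * (m + 1) := Nat.mul_comm _ _
    omega
  have hD : S.card - 1 = (n * 0 + n * 0 + n * 0) + (n ^ 2 * N2 + n ^ 2 * N2 + n ^ 2 * N2)
      + n ^ 3 * ((s - 1) * (s - 2) + (s - 1) * (s - 2)) := by omega
  rw [hD, hgg]
  have hqmm : q = 4 * (m * m) + 12 * m + 9 := by rw [hq, hsm]; ring
  have eq1 : q - 1 = 4 * (m * m) + 12 * m + 8 := by omega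
  have eq2 : q + 1 = 4 * (m * m) + 12 * m + 10 := by omega
  rw [eq1, eq2, hN2, es1, es2, hnm, hsm]
  ring
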